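/- Let A be a matrix over the field with two elements F₂ with at least n non-zero entries, such that each row and each column contains at most M non-zero entries. Then the rank of A over F₂ is at least n/M². -/

import Mathlib

open scoped Classical

/-- A matrix over `F₂` with at least `n` non-zero entries and at most `M`
non-zero entries in each row and column has rank at least `n / M²`
(equivalently, `n ≤ M² · rank`). -/
theorem stmt1 {m k : Type*} [Fintype m] [Fintype k] [DecidableEq m] [DecidableEq k]
    (A : Matrix m k (ZMod 2)) (n M : ℕ)
    (hnonzero : n ≤ (Finset.univ.filter (fun p : m × k => A p.1 p.2 ≠ 0)).card)
    (hrow : ∀ i : m, (Finset.univ.filter (fun j : k => A i j ≠ 0)).card ≤ M)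
    (hcol : ∀ j : k, (Finset.univ.filter (fun i : m => A i j ≠ 0)).card ≤ M) :
    n ≤ M ^ 2 * A.rank := by
  classical
  -- choose linearly independent columns spanning the column space
  obtain ⟨s, hst, hspan, hli⟩ :=
    exists_linearIndependent (ZMod 2) (Set.range A.transpose)
  have hsfin : s.Finite := (Set.finite_range A.transpose).subset hst
  haveI : Fintype s := hsfin.fintype
  have hcard : hsfin.toFinset.card = A.rank := by
    rw [Matrix.rank_eq_finrank_span_cols, show A.col = A.transpose from rfl, ← hspan, finrank_span_set_eq_card hli]
    simp only [Set.Finite.card_toFinset, Set.toFinset_card, Set.toFinite_toFinset]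
  -- the set of rows touched by the chosen columns
  set R : Finset m := hsfin.toFinset.biUnion
      (fun v => Finset.univ.filter (fun i => v i ≠ 0)) with hR
  have hRcard : R.card ≤ M * A.rank := by
    calc R.card ≤ ∑ v ∈ hsfin.toFinset, (Finset.univ.filter (fun i => v i ≠ 0)).card :=
          Finset.card_biUnion_le
      _ ≤ ∑ _v ∈ hsfin.toFinset, M := by
          apply Finset.sum_le_sum
          intro v hv
          obtain ⟨j, rfl⟩ := hst (hsfin.mem_toFinset.mp hv)
          exact hcol j
      _ = M * A.rank := by rw [Finset.sum_const, smul_eq_mul, mul_comm, hcard]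
  -- every nonzero row is in R
  have hrowR : ∀ i : m, (∃ j, A i j ≠ 0) → i ∈ R := by
    intro i ⟨j, hij⟩
    by_contra hiR
    have hzero : ∀ v ∈ s, v i = 0 := by
      intro v hv
      by_contra hvi
      exact hiR (Finset.mem_biUnion.mpr ⟨v, hsfin.mem_toFinset.mpr hv,
        Finset.mem_filter.mpr ⟨Finset.mem_univ _, hvi⟩⟩)
    -- the submodule of vectors vanishing at i
    have hmem : A.transpose j ∈ Submodule.span (ZMod 2) s := by
      rw [hspan]; exact Submodule.subset_span ⟨j, rfl⟩
    have : (A.transpose j) i = 0 := by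
      have : A.transpose j ∈ LinearMap.ker (LinearMap.proj (R := ZMod 2) (φ := fun _ : m => ZMod 2) i) := by
        apply Submodule.span_le.mpr _ hmem
        intro v hv
        simpa using hzero v hv
      simpa using this
    exact hij this
  -- count nonzero entries
  have hcount : (Finset.univ.filter (fun p : m × k => A p.1 p.2 ≠ 0)).card ≤ M * R.card := by
    calc (Finset.univ.filter (fun p : m × k => A p.1 p.2 ≠ 0)).card
        = ∑ i : m, (Finset.univ.filter (fun j : k => A i j ≠ 0)).card := by
          rw [Finset.card_filter, Fintype.sum_prod_type]
          exact Finset.sum_congr rfl fun i _ => (Finset.card_filter _ _).symm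
      _ ≤ ∑ i ∈ R, M := by
          rw [← Finset.sum_filter_add_sum_filter_not Finset.univ (fun i => i ∈ R)]
          have h1 : ∑ i ∈ Finset.univ.filter (fun i => i ∈ R),
              (Finset.univ.filter (fun j : k => A i j ≠ 0)).card ≤ ∑ i ∈ R, M := by
            rw [Finset.filter_mem_eq_inter, Finset.univ_inter]
            exact Finset.sum_le_sum fun i _ => hrow i
          have h2 : ∑ i ∈ Finset.univ.filter (fun i => i ∉ R),
              (Finset.univ.filter (fun j : k => A i j ≠ 0)).card = 0 := by
            apply Finset.sum_eq_zero
            intro i hi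
            rw [Finset.mem_filter] at hi
            rw [Finset.card_eq_zero, Finset.filter_eq_empty_iff]
            intro j _
            by_contra hj
            exact hi.2 (hrowR i ⟨j, hj⟩)
          omega
      _ = M * R.card := by rw [Finset.sum_const, smul_eq_mul, mul_comm]
  calc n ≤ M * R.card := hnonzero.trans hcount
    _ ≤ M * (M * A.rank) := Nat.mul_le_mul_left M hRcard
    _ = M ^ 2 * A.rank := by ring
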